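/- For an integer k ≥ 1, define D : [1/2, 1] → ℝ by D(y) = ((1/2 + 1/(4k))y) / ((1/2 + 1/(4k))y + (1/2 − 1/(4k))(1−y)) − ((1/2 − 1/(4k))y) / ((1/2 − 1/(4k))y + (1/2 + 1/(4k))(1−y)). Then D is nonincreasing on [1/2, 1], and for every y ∈ [1/2, 9/10], D(y) ≥ 9k/(50k² − 8) ≥ 1/(6k). -/
import Mathlib


noncomputable section

/-- The difference `D(y)` between the conditional probabilities of the high forecast. -/
def Dk (k : ℕ) (y : ℝ) : ℝ :=
  ((1/2 + 1/(4*(k:ℝ))) * y)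
      / ((1/2 + 1/(4*(k:ℝ))) * y + (1/2 - 1/(4*(k:ℝ))) * (1 - y))
    - ((1/2 - 1/(4*(k:ℝ))) * y)
      / ((1/2 - 1/(4*(k:ℝ))) * y + (1/2 + 1/(4*(k:ℝ))) * (1 - y))

lemma Dk_eq (k : ℕ) (hk : 1 ≤ k) {y : ℝ} (hy : y ∈ Set.Icc (1/2 : ℝ) 1) :
    Dk k y = 8*(k:ℝ)*(y*(1-y)) / (4*(k:ℝ)^2 - 1 + 4*(y*(1-y))) := by
  obtain ⟨hy1, hy2⟩ := hy
  have hK : (1:ℝ) ≤ (k:ℝ) := by exact_mod_cast hk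
  have hK0 : (0:ℝ) < (k:ℝ) := by linarith
  have hc : (0:ℝ) < 1/(4*(k:ℝ)) := by positivity
  have hc4 : 1/(4*(k:ℝ)) ≤ 1/4 := by
    rw [div_le_div_iff₀ (by positivity) (by norm_num)]; linarith
  have hd1 : (0:ℝ) < (1/2 + 1/(4*(k:ℝ))) * y + (1/2 - 1/(4*(k:ℝ))) * (1 - y) := by
    nlinarith [mul_nonneg hc.le (show (0:ℝ) ≤ 2*y - 1 by linarith)]
  have hd2 : (0:ℝ) < (1/2 - 1/(4*(k:ℝ))) * y + (1/2 + 1/(4*(k:ℝ))) * (1 - y) := by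
    nlinarith [mul_le_mul hc4 (show 2*y - 1 ≤ 1 by linarith)
      (by linarith) (by norm_num : (0:ℝ) ≤ 1/4)]
  have hd3 : (0:ℝ) < 4*(k:ℝ)^2 - 1 + 4*(y*(1-y)) := by
    nlinarith [mul_nonneg (show (0:ℝ) ≤ y by linarith) (show (0:ℝ) ≤ 1 - y by linarith)]
  have h1 : (-2 + (k:ℝ)*4 + y*4) ≠ 0 := by intro h; linarith
  have h2 : (2 + ((k:ℝ)*4 - y*4)) ≠ 0 := by intro h; linarith
  rw [Dk, div_sub_div _ _ hd1.ne' hd2.ne', div_eq_div_iff (mul_pos hd1 hd2).ne' hd3.ne']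
  have hk4 : (4*(k:ℝ)) ≠ 0 := by positivity
  field_simp
  ring

theorem stmt_15 (k : ℕ) (hk : 1 ≤ k) :
    AntitoneOn (Dk k) (Set.Icc (1/2 : ℝ) 1) ∧
    ∀ y ∈ Set.Icc (1/2 : ℝ) (9/10),
      9*(k:ℝ)/(50*(k:ℝ)^2 - 8) ≤ Dk k y ∧ 1/(6*(k:ℝ)) ≤ 9*(k:ℝ)/(50*(k:ℝ)^2 - 8) := by
  have hK : (1:ℝ) ≤ (k:ℝ) := by exact_mod_cast hk
  have hK0 : (0:ℝ) < (k:ℝ) := by linarith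
  constructor
  · intro x hx y hy hxy
    rw [Dk_eq k hk hx, Dk_eq k hk hy]
    obtain ⟨hx1, hx2⟩ := hx
    obtain ⟨hy1, hy2⟩ := hy
    have ht : y*(1-y) ≤ x*(1-x) := by nlinarith
    have htx : (0:ℝ) ≤ x*(1-x) := by nlinarith
    have hty : (0:ℝ) ≤ y*(1-y) := by nlinarith
    have hdx : (0:ℝ) < 4*(k:ℝ)^2 - 1 + 4*(x*(1-x)) := by nlinarith
    have hdy : (0:ℝ) < 4*(k:ℝ)^2 - 1 + 4*(y*(1-y)) := by nlinarith
    rw [div_le_div_iff₀ hdy hdx]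
    nlinarith [mul_nonneg (mul_nonneg (show (0:ℝ) ≤ 8*(k:ℝ) by linarith)
      (show (0:ℝ) ≤ 4*(k:ℝ)^2 - 1 by nlinarith)) (show (0:ℝ) ≤ x*(1-x) - y*(1-y) by linarith)]
  · intro y hy
    obtain ⟨hy1, hy2⟩ := hy
    have hy2' : y ≤ 1 := by linarith
    rw [Dk_eq k hk ⟨hy1, hy2'⟩]
    have ht9 : (9:ℝ)/100 ≤ y*(1-y) := by nlinarith
    have ht4 : y*(1-y) ≤ 1/4 := by nlinarith
    have hd : (0:ℝ) < 4*(k:ℝ)^2 - 1 + 4*(y*(1-y)) := by nlinarith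
    have h50 : (0:ℝ) < 50*(k:ℝ)^2 - 8 := by nlinarith
    constructor
    · rw [div_le_div_iff₀ h50 hd]
      nlinarith [mul_nonneg (show (0:ℝ) ≤ 4*(k:ℝ)^2 - 1 by nlinarith)
        (show (0:ℝ) ≤ 100*(y*(1-y)) - 9 by linarith), hK0.le]
    · rw [div_le_div_iff₀ (by positivity) h50]
      nlinarith
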